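/- Let i-MARK(S,D) be given with s = max S, let n ∈ ℕ, and let c ≥ s. Suppose convergence occurs in c steps at starting position n, i.e., 𝒢_σ(m) = 𝒢_{σ'}(m) for all pairs of guess seeds σ, σ' for n and all m with n+c ≤ m < n+c+s. Then for every guess seed σ for n, the guess sequence satisfies 𝒢_σ(m) = 𝒢(m) for all m ≥ n+c. -/
import Mathlib


/-- The minimum excludant of a set of naturals. -/
noncomputable def mex (T : Set ℕ) : ℕ := sInf {k : ℕ | k ∉ T}

/-- The set of followers of position `n` in the game i-MARK(S,D):
`n - s` for `s ∈ S` with `0 < s ≤ n`, and `n / d` for `d ∈ D` with `2 ≤ d`, `0 < n`, `d ∣ n`. -/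
def followers (S D : Finset ℕ) (n : ℕ) : Finset ℕ :=
  ((S.filter fun s => 0 < s ∧ s ≤ n).image fun s => n - s) ∪
  ((D.filter fun d => 2 ≤ d ∧ 0 < n ∧ d ∣ n).image fun d => n / d)

theorem followers_lt {S D : Finset ℕ} {n m : ℕ} (h : m ∈ followers S D n) : m < n := by
  simp only [followers, Finset.mem_union, Finset.mem_image, Finset.mem_filter] at h
  rcases h with ⟨s, ⟨-, hs, hsn⟩, rfl⟩ | ⟨d, ⟨-, hd, hn, -⟩, rfl⟩
  · omega
  · exact Nat.div_lt_self hn (by omega)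

/-- The Sprague–Grundy function of i-MARK(S,D). -/
noncomputable def grundy (S D : Finset ℕ) : ℕ → ℕ
  | n => mex ↑((followers S D n).attach.image fun m => grundy S D m.1)
decreasing_by exact followers_lt m.2

/-- The number of followers of position `n` in i-MARK(S,D) (for positive `S` and `D` with
elements `≥ 2`): `φ(0) = 0` and `φ(n) = #{s ∈ S : s ≤ n} + #{d ∈ D : d ∣ n}` for `n > 0`. -/
def numFollowers (S D : Finset ℕ) (n : ℕ) : ℕ :=
  if n = 0 then 0 else (S.filter fun s => s ≤ n).card + (D.filter fun d => d ∣ n).card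


lemma mex_le_card (T : Finset ℕ) : mex ↑T ≤ T.card := by
  have h : ∃ k ≤ T.card, k ∉ T := by
    by_contra h
    push_neg at h
    have hsub : Finset.range (T.card + 1) ⊆ T := fun k hk =>
      h k (Nat.lt_succ_iff.mp (Finset.mem_range.mp hk))
    have := Finset.card_le_card hsub
    simp at this
  obtain ⟨k, hk, hkT⟩ := h
  exact le_trans (Nat.sInf_le (by simpa using hkT)) hk

lemma followers_card_le (S D : Finset ℕ) (m : ℕ) :
    (followers S D m).card ≤ numFollowers S D m := by
  unfold followers numFollowers
  split_ifs with h
  · subst h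
    have h1 : Finset.filter (fun s => 0 < s ∧ s ≤ 0) S = ∅ :=
      Finset.filter_eq_empty_iff.mpr (by intro x _; omega)
    have h2 : Finset.filter (fun d => 2 ≤ d ∧ 0 < 0 ∧ d ∣ 0) D = ∅ :=
      Finset.filter_eq_empty_iff.mpr (by intro x _; omega)
    rw [h1, h2]
    simp
  · refine (Finset.card_union_le _ _).trans (add_le_add ?_ ?_)
    · exact (Finset.card_image_le).trans (Finset.card_le_card (by intro x hx; simp at *; tauto))
    · exact (Finset.card_image_le).trans (Finset.card_le_card (by intro x hx; simp at *; tauto))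

lemma grundy_le (S D : Finset ℕ) (m : ℕ) : grundy S D m ≤ numFollowers S D m := by
  rw [grundy]
  refine (mex_le_card _).trans ?_
  refine (Finset.card_image_le).trans ?_
  rw [Finset.card_attach]
  exact followers_card_le S D m

lemma grundy_eq_mex (S D : Finset ℕ) (m : ℕ) :
    grundy S D m = mex ((↑((S.filter fun t => 0 < t ∧ t ≤ m).attach.image
        fun t => grundy S D (m - t.1)) : Set ℕ) ∪
      {g | ∃ d ∈ D, 2 ≤ d ∧ 0 < m ∧ d ∣ m ∧ g = grundy S D (m / d)}) := by
  rw [grundy]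
  congr 1
  ext g
  simp only [Finset.coe_image, Set.mem_image, Finset.mem_coe, Finset.mem_attach,
    Set.mem_union, Set.mem_setOf_eq, followers, Finset.mem_union, Finset.mem_image,
    Finset.mem_filter, true_and, Subtype.exists]
  constructor
  · rintro ⟨x, hx, rfl⟩
    rcases hx with ⟨s, ⟨hsS, hs0, hsm⟩, rfl⟩ | ⟨d, ⟨hdD, hd2, hm0, hdm⟩, rfl⟩
    · exact Or.inl ⟨s, ⟨hsS, hs0, hsm⟩, rfl⟩
    · exact Or.inr ⟨d, hdD, hd2, hm0, hdm, rfl⟩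
  · rintro (⟨s, hs, rfl⟩ | ⟨d, hdD, hd2, hm0, hdm, rfl⟩)
    · exact ⟨m - s, Or.inl ⟨s, hs, rfl⟩, rfl⟩
    · exact ⟨m / d, Or.inr ⟨d, ⟨hdD, hd2, hm0, hdm⟩, rfl⟩, rfl⟩

/-- `σ : ℕ → ℕ` is a guess seed for starting position `n` in i-MARK(S,D) if
`σ i ≤ φ(i)` for all `n ≤ i < n + max S` (values of `σ` outside this window are irrelevant). -/
def IsGuessSeed (S D : Finset ℕ) (n : ℕ) (σ : ℕ → ℕ) : Prop :=
  ∀ i, n ≤ i → i < n + S.sup id → σ i ≤ numFollowers S D i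

/-- The guess sequence generated by seed `σ` from starting position `n`: it equals `σ` on
`[n, n + max S)`, and from `n + max S` on it is computed by the mex rule, using guessed values
for subtraction followers and true Grundy values for division followers. -/
noncomputable def guessSeq (S D : Finset ℕ) (n : ℕ) (σ : ℕ → ℕ) : ℕ → ℕ
  | m =>
    if m < n + S.sup id then σ m
    else
      mex ((↑((S.filter fun t => 0 < t ∧ t ≤ m).attach.image
              fun t => guessSeq S D n σ (m - t.1)) : Set ℕ) ∪
        {g | ∃ d ∈ D, 2 ≤ d ∧ 0 < m ∧ d ∣ m ∧ g = grundy S D (m / d)})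
decreasing_by
  have ht := t.2
  simp only [Finset.mem_filter] at ht
  omega

/-- Convergence occurs in `c` steps at starting position `n`: any two guess sequences from `n`
agree on all positions `m` with `n + c ≤ m < n + c + max S`. -/
def ConvergesIn (S D : Finset ℕ) (n c : ℕ) : Prop :=
  ∀ σ σ' : ℕ → ℕ, IsGuessSeed S D n σ → IsGuessSeed S D n σ' →
    ∀ m, n + c ≤ m → m < n + c + S.sup id → guessSeq S D n σ m = guessSeq S D n σ' m


lemma guessSeq_grundy (S D : Finset ℕ) (n : ℕ) :
    ∀ m, n ≤ m → guessSeq S D n (grundy S D) m = grundy S D m := by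
  intro m
  induction m using Nat.strong_induction_on with
  | _ m ih =>
    intro hm
    rw [guessSeq]
    split_ifs with h
    · rfl
    · rw [grundy_eq_mex S D m]
      have himg : ((S.filter fun t => 0 < t ∧ t ≤ m).attach.image
            fun t => guessSeq S D n (grundy S D) (m - t.1)) =
          ((S.filter fun t => 0 < t ∧ t ≤ m).attach.image fun t => grundy S D (m - t.1)) := by
        refine Finset.image_congr ?_
        intro t _
        have htS := t.2
        simp only [Finset.mem_filter] at htS
        have hsup : t.1 ≤ S.sup id := Finset.le_sup (f := id) htS.1
        exact ih (m - t.1) (by omega) (by omega)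
      rw [himg]

/-- If convergence occurs in `c` steps (`c ≥ s = max S`) at starting position `n` in
i-MARK(S,D), then every guess sequence for `n` equals the true Grundy function from
position `n + c` on. -/
theorem convergence_gives_grundy (S D : Finset ℕ) (hS : S.Nonempty)
    (hSpos : ∀ s ∈ S, 0 < s) (hD : ∀ d ∈ D, 2 ≤ d) (n c : ℕ) (hc : S.sup id ≤ c)
    (hconv : ConvergesIn S D n c) :
    ∀ σ : ℕ → ℕ, IsGuessSeed S D n σ →
      ∀ m, n + c ≤ m → guessSeq S D n σ m = grundy S D m := by
  have hσ₀ : IsGuessSeed S D n (grundy S D) := fun i _ _ => grundy_le S D i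
  intro σ hσ m
  induction m using Nat.strong_induction_on with
  | _ m ih =>
    intro hm
    by_cases h : m < n + c + S.sup id
    · rw [hconv σ (grundy S D) hσ hσ₀ m hm h, guessSeq_grundy S D n m (by omega)]
    · have hns : ¬ m < n + S.sup id := by omega
      rw [guessSeq, if_neg hns, grundy_eq_mex S D m]
      have himg : ((S.filter fun t => 0 < t ∧ t ≤ m).attach.image
            fun t => guessSeq S D n σ (m - t.1)) =
          ((S.filter fun t => 0 < t ∧ t ≤ m).attach.image fun t => grundy S D (m - t.1)) := by
        refine Finset.image_congr ?_
        intro t _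
        have htS := t.2
        simp only [Finset.mem_filter] at htS
        have hsup : t.1 ≤ S.sup id := Finset.le_sup (f := id) htS.1
        exact ih (m - t.1) (by omega) (by omega)
      rw [himg]
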